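/- For every integer k ≥ 1, every k-tree that is cobipartite is a linear k-tree; that is, a cobipartite k-tree either is a (k+1)-clique or has exactly two vertices of degree k. -/

import Mathlib

/-!  Common definitions: zero forcing (standard, loop, positive semidefinite),
zero-nonzero patterns, triangles, and related graph parameters. -/

variable {V : Type*}

/-- Standard zero forcing rule: with filled set `S`, the filled vertex `v` can force
its unique unfilled neighbor `u`. -/
def StdForce (G : SimpleGraph V) (S : Set V) (v u : V) : Prop :=
  v ∈ S ∧ u ∉ S ∧ G.Adj v u ∧ ∀ w, G.Adj v w → w ∉ S → w = u

/-- Adjacency in the looping of `G` with loops at the vertices in `L`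
(a vertex counts as its own neighbor iff it has a loop). -/
def LoopAdj (G : SimpleGraph V) (L : Set V) (v w : V) : Prop :=
  G.Adj v w ∨ (v = w ∧ v ∈ L)

/-- Loop zero forcing rule (the forcing vertex need not be filled): `v` can force `u`
if `u` is the only unfilled neighbor of `v` in the looping. -/
def LoopForce (G : SimpleGraph V) (L : Set V) (S : Set V) (v u : V) : Prop :=
  u ∉ S ∧ LoopAdj G L v u ∧ ∀ w, LoopAdj G L v w → w ∉ S → w = u

/-- Positive semidefinite zero forcing rule: the filled vertex `v` can force the unfilled
vertex `u` if `u` is the only neighbor of `v` in the connected component of `u` of the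
subgraph induced by the unfilled vertices. -/
def PsdForce (G : SimpleGraph V) (S : Set V) (v u : V) : Prop :=
  v ∈ S ∧ u ∉ S ∧ G.Adj v u ∧
    ∀ w, G.Adj v w → w ∉ S →
      Relation.ReflTransGen (fun a b => G.Adj a b ∧ a ∉ S ∧ b ∉ S) u w → w = u

/-- The vertices performing a force in a forcing sequence. -/
def sourcesOf (seq : List (V × V)) : Set V := {v | ∃ p ∈ seq, p.1 = v}

/-- The vertices that get forced in a forcing sequence. -/
def targetsOf (seq : List (V × V)) : Set V := {u | ∃ p ∈ seq, p.2 = u}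

/-- The filled set after performing all forces of `seq` starting from `F`. -/
def filledAfter (F : Set V) (seq : List (V × V)) : Set V := F ∪ targetsOf seq

/-- `ValidSeq rule seq F`: starting with `F` as the filled set, the sequence of forces
`seq` is permitted (each force in turn is allowed by `rule`, and each vertex forces
at most once). -/
def ValidSeq (rule : Set V → V → V → Prop) : List (V × V) → Set V → Prop
  | [], _ => True
  | (v, u) :: rest, F => rule F v u ∧ (∀ p ∈ rest, p.1 ≠ v) ∧ ValidSeq rule rest (insert u F)

/-- `F` is a zero forcing set w.r.t. the forcing rule `rule`. -/
def IsZFSet (rule : Set V → V → V → Prop) (F : Set V) : Prop :=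
  ∃ seq : List (V × V), ValidSeq rule seq F ∧ filledAfter F seq = Set.univ

/-- `F` is a zero forcing set (w.r.t. `rule`) from which `R` can be the set of vertices
that force: some (automatically complete) forcing sequence from `F` fills every vertex
and the set of vertices performing a force is exactly `R`. -/
def ForcesWith (rule : Set V → V → V → Prop) (F R : Set V) : Prop :=
  ∃ seq : List (V × V), ValidSeq rule seq F ∧ filledAfter F seq = Set.univ ∧
    sourcesOf seq = R

/-- The zero forcing number w.r.t. a forcing rule. -/
noncomputable def Znum (rule : Set V → V → V → Prop) : ℕ :=
  sInf {n | ∃ F : Set V, IsZFSet rule F ∧ F.ncard = n}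

/-- The (standard) zero forcing number `Z(G)`. -/
noncomputable def Z (G : SimpleGraph V) : ℕ := Znum (StdForce G)

/-- The zero forcing number of the looping of `G` with loops at `L`. -/
noncomputable def Zloop (G : SimpleGraph V) (L : Set V) : ℕ := Znum (LoopForce G L)

/-- The positive semidefinite zero forcing number `Z₊(G)`. -/
noncomputable def Zplus (G : SimpleGraph V) : ℕ := Znum (PsdForce G)

/-- The enhanced zero forcing number `Ẑ(G)`: the maximum over all loopings of `G` of the
zero forcing number of the looping. -/
noncomputable def Zhat (G : SimpleGraph V) : ℕ := sSup {n | ∃ L : Set V, Zloop G L = n}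

/-- `F` is a direct zero forcing set for `G`: some forcing sequence from `F` fills every
vertex and every vertex that performs a force belongs to `F`. -/
def IsDirectZFSet (G : SimpleGraph V) (F : Set V) : Prop :=
  ∃ seq : List (V × V), ValidSeq (StdForce G) seq F ∧ filledAfter F seq = Set.univ ∧
    sourcesOf seq ⊆ F

/-- The direct zero forcing number `Z_d(G)`. -/
noncomputable def Zd (G : SimpleGraph V) : ℕ :=
  sInf {n | ∃ F : Set V, IsDirectZFSet G F ∧ F.ncard = n}

/-- A zero-nonzero pattern `Y` (entry `Y i j` means the `(i,j)` entry is `*`)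
has a `k × k` submatrix that is a triangle. -/
def HasTriOfSize {ρ γ : Type*} (Y : ρ → γ → Prop) (k : ℕ) : Prop :=
  ∃ (r : Fin k → ρ) (c : Fin k → γ), Function.Injective r ∧ Function.Injective c ∧
    (∀ i, Y (r i) (c i)) ∧ ∀ i j : Fin k, i < j → ¬ Y (r i) (c j)

/-- The triangle number `tri(Y)` of a zero-nonzero pattern. -/
noncomputable def tri {ρ γ : Type*} (Y : ρ → γ → Prop) : ℕ := sSup {k | HasTriOfSize Y k}

/-- Membership in `S_znz(G)`: off the diagonal, the pattern matches the adjacency of `G`. -/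
def InSznz (G : SimpleGraph V) (A : V → V → Prop) : Prop :=
  ∀ i j : V, i ≠ j → (A i j ↔ G.Adj i j)

/-- The zero-nonzero pattern of the looping of `G` with loops at `L`. -/
def loopPattern (G : SimpleGraph V) (L : Set V) : V → V → Prop :=
  fun i j => (i = j ∧ i ∈ L) ∨ (i ≠ j ∧ G.Adj i j)

/-- The submatrix of the pattern `Y` with rows `R` and columns `C` is a triangle:
there are enumerations of `R` and `C` realizing a lower-triangular pattern with `*`
diagonal (in particular `|R| = |C|`). -/
def SubIsTriangle {ρ γ : Type*} (Y : ρ → γ → Prop) (R : Finset ρ) (C : Finset γ) : Prop :=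
  ∃ (k : ℕ) (r : Fin k → ρ) (c : Fin k → γ),
    Function.Injective r ∧ Function.Injective c ∧
    (∀ x : ρ, x ∈ R ↔ ∃ i, r i = x) ∧ (∀ y : γ, y ∈ C ↔ ∃ i, c i = y) ∧
    (∀ i, Y (r i) (c i)) ∧ ∀ i j : Fin k, i < j → ¬ Y (r i) (c j)

/-- `(R, C)` is a persistent triangle of `G`. -/
def PersistentTriangle (G : SimpleGraph V) (R C : Finset V) : Prop :=
  ∀ A : V → V → Prop, InSznz G A → SubIsTriangle A R C

/-- `F` is a direct zero forcing set for `G` from which `R` can be the set of vertices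
that force. -/
def DirectForcesWith (G : SimpleGraph V) (F R : Set V) : Prop :=
  ∃ seq : List (V × V), ValidSeq (StdForce G) seq F ∧ filledAfter F seq = Set.univ ∧
    sourcesOf seq = R ∧ R ⊆ F

/-- `(range r, range c)` is a partition of `G` according to the `m × n` pattern `Y`,
with labelings given by `r` and `c`. -/
def PartitionAccording (G : SimpleGraph V) {m n : ℕ} (Y : Fin m → Fin n → Prop)
    (r : Fin m → V) (c : Fin n → V) : Prop :=
  Function.Injective r ∧ Function.Injective c ∧ (∀ i j, r i ≠ c j) ∧
    (∀ v : V, (∃ i, r i = v) ∨ (∃ j, c j = v)) ∧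
    ∀ i j, G.Adj (r i) (c j) ↔ Y i j

/-- `F` is a zero forcing set for `G` that forces from `V1` to `V2`. -/
def ForcesFromTo (G : SimpleGraph V) (F V1 V2 : Set V) : Prop :=
  V1 ⊆ F ∧ ∃ seq : List (V × V), ValidSeq (StdForce G) seq F ∧
    filledAfter F seq = Set.univ ∧ sourcesOf seq ⊆ V1 ∧ targetsOf seq ⊆ V2

/-- `(V1, V2)` is a partition of the vertex set of `G` into two cliques. -/
def IsCliquePartition (G : SimpleGraph V) (V1 V2 : Set V) : Prop :=
  Disjoint V1 V2 ∧ V1 ∪ V2 = Set.univ ∧ G.IsClique V1 ∧ G.IsClique V2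

/-- `G` is cobipartite. -/
def Cobipartite (G : SimpleGraph V) : Prop := ∃ V1 V2 : Set V, IsCliquePartition G V1 V2

/-- `G` is the cobipartite graph associated with the pattern `Y`, via labelings `r`, `c`. -/
def CobipAssociated (G : SimpleGraph V) {m n : ℕ} (Y : Fin m → Fin n → Prop)
    (r : Fin m → V) (c : Fin n → V) : Prop :=
  PartitionAccording G Y r c ∧ G.IsClique (Set.range r) ∧ G.IsClique (Set.range c)

/-- `z` is a critical vertex: some optimal forcing sequence neither lets `z` force
nor forces `z`. -/
def Critical (G : SimpleGraph V) (z : V) : Prop :=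
  ∃ (F : Set V) (seq : List (V × V)), F.ncard = Z G ∧ ValidSeq (StdForce G) seq F ∧
    filledAfter F seq = Set.univ ∧ z ∉ sourcesOf seq ∧ z ∉ targetsOf seq

/-- `z` is an uncritical vertex: in every optimal forcing sequence, exactly one of the
following holds: `z` performs a force, or `z` gets forced. -/
def Uncritical (G : SimpleGraph V) (z : V) : Prop :=
  ∀ (F : Set V) (seq : List (V × V)), F.ncard = Z G → ValidSeq (StdForce G) seq F →
    filledAfter F seq = Set.univ → (z ∈ sourcesOf seq ↔ z ∉ targetsOf seq)

/-- The maximum nullity `M(G)` over the field `𝔽`. -/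
noncomputable def Mnum (𝔽 : Type*) [Field 𝔽] [Fintype V] [DecidableEq V]
    (G : SimpleGraph V) : ℕ :=
  sSup {k | ∃ A : Matrix V V 𝔽, A.IsSymm ∧ (∀ i j : V, i ≠ j → (A i j ≠ 0 ↔ G.Adj i j)) ∧
    k = Fintype.card V - A.rank}

/-- The minimum rank `mr_𝔽(Y)` of a zero-nonzero pattern over the field `𝔽`. -/
noncomputable def mr (𝔽 : Type*) [Field 𝔽] {m n : ℕ} (Y : Fin m → Fin n → Prop) : ℕ :=
  sInf {k | ∃ A : Matrix (Fin m) (Fin n) 𝔽, (∀ i j, A i j ≠ 0 ↔ Y i j) ∧ A.rank = k}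

/-- `G` is a `k`-tree: there is a construction ordering of the vertices in which the
first `k+1` vertices form a clique and every later vertex is adjacent among the earlier
vertices to exactly a `k`-clique. -/
def IsKTree (k : ℕ) [Fintype V] (G : SimpleGraph V) : Prop :=
  k + 1 ≤ Fintype.card V ∧ ∃ ord : V ≃ Fin (Fintype.card V),
    (∀ u v : V, (ord u : ℕ) < k + 1 → (ord v : ℕ) < k + 1 → u ≠ v → G.Adj u v) ∧
    ∀ v : V, k + 1 ≤ (ord v : ℕ) →
      G.IsClique {u : V | (ord u : ℕ) < (ord v : ℕ) ∧ G.Adj u v} ∧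
      {u : V | (ord u : ℕ) < (ord v : ℕ) ∧ G.Adj u v}.ncard = k

section AuxKTree
open Set

/-- `G` is a `k`-tree on `Fin n` in the natural construction order. -/
def NKT (k n : ℕ) (G : SimpleGraph (Fin n)) : Prop :=
  (∀ u v : Fin n, (u : ℕ) < k + 1 → (v : ℕ) < k + 1 → u ≠ v → G.Adj u v) ∧
  ∀ v : Fin n, k + 1 ≤ (v : ℕ) →
    G.IsClique {u : Fin n | (u : ℕ) < (v : ℕ) ∧ G.Adj u v} ∧
    {u : Fin n | (u : ℕ) < (v : ℕ) ∧ G.Adj u v}.ncard = k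

lemma ncard_preimage_equiv {α β : Type*} (e : α ≃ β) (s : Set β) :
    (⇑e ⁻¹' s).ncard = s.ncard := by
  conv_rhs => rw [← Set.image_preimage_eq s e.surjective]
  rw [Set.ncard_image_of_injective _ e.injective]

lemma ncard_early {k n : ℕ} (hn : k + 1 ≤ n) :
    ({u : Fin n | (u : ℕ) < k + 1}).ncard = k + 1 := by
  have h : {u : Fin n | (u : ℕ) < k + 1} = Set.range (Fin.castLE hn) := by
    ext u
    constructor
    · intro hu; exact ⟨⟨u.1, hu⟩, Fin.ext rfl⟩
    · rintro ⟨i, rfl⟩; exact i.2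
  rw [h, ← Set.image_univ, Set.ncard_image_of_injective _ (Fin.castLE_injective hn),
    Set.ncard_univ, Nat.card_eq_fintype_card, Fintype.card_fin]

/-- the early vertices other than `v` are neighbors of early `v`. -/
lemma early_sub {k n : ℕ} {G : SimpleGraph (Fin n)} (H : NKT k n G) {v : Fin n}
    (hv : (v : ℕ) < k + 1) :
    {u : Fin n | (u : ℕ) < k + 1} \ {v} ⊆ G.neighborSet v := by
  rintro u ⟨hu1, hu2⟩
  exact (H.1 u v hu1 hv (by simpa using hu2)).symm

lemma back_sub {n : ℕ} {G : SimpleGraph (Fin n)} (v : Fin n) :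
    {u : Fin n | (u : ℕ) < (v : ℕ) ∧ G.Adj u v} ⊆ G.neighborSet v := fun u hu => hu.2.symm

lemma nkt_min_deg {k n : ℕ} (hn : k + 1 ≤ n) {G : SimpleGraph (Fin n)} (H : NKT k n G)
    (v : Fin n) : k ≤ (G.neighborSet v).ncard := by
  rcases lt_or_ge (v : ℕ) (k + 1) with hv | hv
  · have h1 := Set.ncard_le_ncard (early_sub H hv) (Set.toFinite _)
    rw [Set.ncard_diff_singleton_of_mem
      (show v ∈ {u : Fin n | (u : ℕ) < k + 1} from hv), ncard_early hn] at h1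
    omega
  · have h1 := Set.ncard_le_ncard (back_sub (G := G) v) (Set.toFinite _)
    rw [(H.2 v hv).2] at h1
    exact h1

lemma nkt_nbr_late {k n : ℕ} {G : SimpleGraph (Fin n)} (H : NKT k n G) {v : Fin n}
    (hv : k + 1 ≤ (v : ℕ)) (hd : (G.neighborSet v).ncard = k) :
    G.neighborSet v = {u : Fin n | (u : ℕ) < (v : ℕ) ∧ G.Adj u v} :=
  (Set.eq_of_subset_of_ncard_le (back_sub v) (by rw [hd, (H.2 v hv).2])).symm

lemma nkt_nbr_early {k n : ℕ} (hn : k + 1 ≤ n) {G : SimpleGraph (Fin n)} (H : NKT k n G)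
    {v : Fin n} (hv : (v : ℕ) < k + 1) (hd : (G.neighborSet v).ncard = k) :
    G.neighborSet v = {u : Fin n | (u : ℕ) < k + 1} \ {v} :=
  (Set.eq_of_subset_of_ncard_le (early_sub H hv)
    (by rw [hd, Set.ncard_diff_singleton_of_mem
      (show v ∈ {u : Fin n | (u : ℕ) < k + 1} from hv), ncard_early hn]; omega)).symm

lemma nkt_indep_aux {k n : ℕ} (hk : 1 ≤ k) (hn2 : k + 2 ≤ n) {G : SimpleGraph (Fin n)}
    (H : NKT k n G) (u w : Fin n) (hu : (G.neighborSet u).ncard = k)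
    (hw : (G.neighborSet w).ncard = k) (hlt : (u : ℕ) < (w : ℕ)) : ¬ G.Adj u w := by
  intro hadj
  have hn : k + 1 ≤ n := by omega
  by_cases hwv : k + 1 ≤ (w : ℕ)
  · by_cases huv : k + 1 ≤ (u : ℕ)
    · have hNu := nkt_nbr_late H huv hu
      have hwmem : w ∈ G.neighborSet u := hadj
      rw [hNu] at hwmem
      have h2 : (w : ℕ) < (u : ℕ) := hwmem.1
      omega
    · have hNu := nkt_nbr_early hn H (by omega) hu
      have hwmem : w ∈ G.neighborSet u := hadj
      rw [hNu] at hwmem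
      have h2 : (w : ℕ) < k + 1 := hwmem.1
      omega
  · push_neg at hwv
    have huv : (u : ℕ) < k + 1 := by omega
    set z : Fin n := ⟨k + 1, by omega⟩ with hz
    have hzval : (z : ℕ) = k + 1 := rfl
    have hBz := H.2 z (le_of_eq hzval.symm)
    have hne : u ≠ w := fun h => by omega
    have hNu := nkt_nbr_early hn H huv hu
    have hNw := nkt_nbr_early hn H hwv hw
    have hsub : {x : Fin n | (x : ℕ) < (z : ℕ) ∧ G.Adj x z} ⊆
        {x : Fin n | (x : ℕ) < k + 1} \ {u, w} := by
      rintro x ⟨hx1, hx2⟩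
      refine ⟨hzval ▸ hx1, ?_⟩
      rintro hmem
      rcases (hmem : x = u ∨ x = w) with h | h
      · have hthis : z ∈ G.neighborSet u := by rw [← h]; exact hx2
        rw [hNu] at hthis
        have h2 : (z : ℕ) < k + 1 := hthis.1
        omega
      · have hthis : z ∈ G.neighborSet w := by rw [← h]; exact hx2
        rw [hNw] at hthis
        have h2 : (z : ℕ) < k + 1 := hthis.1
        omega
    have h1 := Set.ncard_le_ncard hsub (Set.toFinite _)
    rw [hBz.2, Set.ncard_diff (by
        rintro x hmem
        rcases (hmem : x = u ∨ x = w) with h | h <;> rw [h]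
        exacts [huv, hwv]) (Set.toFinite _),
      ncard_early hn, Set.ncard_pair hne] at h1
    omega

lemma nkt_indep {k n : ℕ} (hk : 1 ≤ k) (hn2 : k + 2 ≤ n) {G : SimpleGraph (Fin n)}
    (H : NKT k n G) (u w : Fin n) (hu : (G.neighborSet u).ncard = k)
    (hw : (G.neighborSet w).ncard = k) (hne : u ≠ w) : ¬ G.Adj u w := by
  rcases lt_or_gt_of_ne (fun h : (u : ℕ) = (w : ℕ) => hne (Fin.ext h)) with h | h
  · exact nkt_indep_aux hk hn2 H u w hu hw h
  · intro hadj
    exact nkt_indep_aux hk hn2 H w u hw hu h hadj.symm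
lemma nkt_two {k : ℕ} (hk : 1 ≤ k) :
    ∀ (n : ℕ) (G : SimpleGraph (Fin n)), k + 1 ≤ n → NKT k n G →
      n = k + 1 ∨ 2 ≤ {v : Fin n | (G.neighborSet v).ncard = k}.ncard := by
  intro n
  induction n with
  | zero => intro G hn; omega
  | succ m ih =>
    intro G hn H
    by_cases hcase : m + 1 = k + 1
    · exact Or.inl hcase
    right
    have hm : k + 1 ≤ m := by omega
    set G' : SimpleGraph (Fin m) := G.comap Fin.castSucc with hG'
    have hadj' : ∀ a b : Fin m, G'.Adj a b ↔ G.Adj a.castSucc b.castSucc := fun a b => Iff.rfl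
    set z : Fin (m + 1) := Fin.last m with hzdef
    have hzval : (z : ℕ) = m := rfl
    have hBz := H.2 z (by rw [hzval]; exact hm)
    have hNz : G.neighborSet z = {u : Fin (m + 1) | (u : ℕ) < (z : ℕ) ∧ G.Adj u z} := by
      ext x
      constructor
      · intro hx
        have hadj : G.Adj z x := hx
        exact ⟨Fin.val_lt_last (G.ne_of_adj hadj).symm, hadj.symm⟩
      · intro hx
        exact hx.2.symm
    have hdz : (G.neighborSet z).ncard = k := by rw [hNz]; exact hBz.2
    have hNG' : ∀ a : Fin m,
        Fin.castSucc '' (G'.neighborSet a) = G.neighborSet a.castSucc \ {z} := by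
      intro a
      ext x
      constructor
      · rintro ⟨y, hy, rfl⟩
        exact ⟨hy, by simp [hzdef, Fin.ext_iff]; omega⟩
      · rintro ⟨hx, hxz⟩
        have hxm : (x : ℕ) < m := Fin.val_lt_last (by simpa using hxz)
        refine ⟨⟨x.1, hxm⟩, ?_, Fin.ext rfl⟩
        have hcast : Fin.castSucc (⟨x.1, hxm⟩ : Fin m) = x := Fin.ext rfl
        show G'.Adj a ⟨x.1, hxm⟩
        rw [hadj', hcast]
        exact hx
    have hdeg' : ∀ a : Fin m,
        (G'.neighborSet a).ncard = (G.neighborSet a.castSucc \ {z}).ncard := fun a => by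
      rw [← hNG', Set.ncard_image_of_injective _ (Fin.castSucc_injective m)]
    have H' : NKT k m G' := by
      constructor
      · intro a b ha hb hne
        exact H.1 a.castSucc b.castSucc ha hb (fun h => hne (Fin.castSucc_injective m h))
      · intro v hv
        have hvs : k + 1 ≤ ((Fin.castSucc v : Fin (m + 1)) : ℕ) := hv
        obtain ⟨hcl, hcard⟩ := H.2 v.castSucc hvs
        have himg : Fin.castSucc '' {u : Fin m | (u : ℕ) < (v : ℕ) ∧ G'.Adj u v} =
            {u : Fin (m + 1) | (u : ℕ) < ((Fin.castSucc v : Fin (m + 1)) : ℕ) ∧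
              G.Adj u v.castSucc} := by
          ext x
          constructor
          · rintro ⟨y, ⟨hy1, hy2⟩, rfl⟩
            exact ⟨hy1, hy2⟩
          · rintro ⟨hx1, hx2⟩
            have hxm : (x : ℕ) < m := lt_trans hx1 v.2
            refine ⟨⟨x.1, hxm⟩, ⟨hx1, ?_⟩, Fin.ext rfl⟩
            have hcast : Fin.castSucc (⟨x.1, hxm⟩ : Fin m) = x := Fin.ext rfl
            show G'.Adj ⟨x.1, hxm⟩ v
            rw [hadj', hcast]
            exact hx2
        constructor
        · intro a ha b hb hne
          exact hcl (show _ ∈ _ from ⟨ha.1, ha.2⟩) (show _ ∈ _ from ⟨hb.1, hb.2⟩)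
            (fun h => hne (Fin.castSucc_injective m h))
        · rw [← Set.ncard_image_of_injective _ (Fin.castSucc_injective m), himg, hcard]
    by_cases hmk : m = k + 1
    · -- G restricted to non-last vertices is complete
      have hcompl : ∀ x y : Fin (m + 1), x ≠ z → y ≠ z → x ≠ y → G.Adj x y := by
        intro x y hxz hyz hxy
        exact H.1 x y (by have := Fin.val_lt_last hxz; omega)
          (by have := Fin.val_lt_last hyz; omega) hxy
      have hcard2 : ({x : Fin (m + 1) | x ≠ z}).ncard = m := by
        have h : {x : Fin (m + 1) | x ≠ z} = Set.univ \ {z} := by ext x; simp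
        rw [h, Set.ncard_diff (by simp) (Set.toFinite _), Set.ncard_univ,
          Nat.card_eq_fintype_card, Fintype.card_fin, Set.ncard_singleton]
        omega
      obtain ⟨x, hx1, hx2⟩ := Set.exists_mem_notMem_of_ncard_lt_ncard
        (show (G.neighborSet z).ncard < ({x : Fin (m + 1) | x ≠ z}).ncard by
          rw [hdz, hcard2]; omega) (Set.toFinite _)
      have hxz : x ≠ z := hx1
      have hNx : G.neighborSet x = Set.univ \ {x, z} := by
        ext y
        constructor
        · intro hy
          have hadj : G.Adj x y := hy
          refine ⟨Set.mem_univ _, ?_⟩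
          rintro hmem
          rcases (hmem : y = x ∨ y = z) with h | h
          · rw [h] at hadj; exact G.loopless.irrefl x hadj
          · rw [h] at hadj; exact hx2 hadj.symm
        · rintro ⟨-, hy⟩
          have hyx : y ≠ x := fun h => hy (Or.inl h)
          have hyz : y ≠ z := fun h => hy (Or.inr h)
          exact hcompl x y hxz hyz (Ne.symm hyx)
      have hdx : (G.neighborSet x).ncard = k := by
        rw [hNx, Set.ncard_diff (by simp) (Set.toFinite _), Set.ncard_univ,
          Nat.card_eq_fintype_card, Fintype.card_fin, Set.ncard_pair hxz]
        omega
      calc 2 = ({x, z} : Set (Fin (m + 1))).ncard := (Set.ncard_pair hxz).symm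
        _ ≤ _ := Set.ncard_le_ncard
            (by rintro a hmem; rcases (hmem : a = x ∨ a = z) with h | h <;> rw [h]
                exacts [hdx, hdz]) (Set.toFinite _)
    · have hm2 : k + 2 ≤ m := by omega
      have h2 : 2 ≤ {v : Fin m | (G'.neighborSet v).ncard = k}.ncard := by
        rcases ih G' hm H' with h | h
        · exact absurd h hmk
        · exact h
      obtain ⟨u₁, u₂, hu₁, hu₂, hne12⟩ := (Set.one_lt_ncard_iff (Set.toFinite _)).mp
        (by omega : 1 < {v : Fin m | (G'.neighborSet v).ncard = k}.ncard)
      have key : ∀ a : Fin m, (G'.neighborSet a).ncard = k → ¬ G.Adj a.castSucc z →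
          2 ≤ {v : Fin (m + 1) | (G.neighborSet v).ncard = k}.ncard := by
        intro a hda hnadj
        have hzn : z ∉ G.neighborSet a.castSucc := fun h => hnadj h
        have hdx : (G.neighborSet a.castSucc).ncard = k := by
          rw [← Set.diff_singleton_eq_self hzn, ← hdeg' a, hda]
        have haz : a.castSucc ≠ z := by simp [hzdef, Fin.ext_iff]; omega
        calc 2 = ({a.castSucc, z} : Set (Fin (m + 1))).ncard := (Set.ncard_pair haz).symm
          _ ≤ _ := Set.ncard_le_ncard
              (by rintro b hmem; rcases (hmem : b = a.castSucc ∨ b = z) with h | h <;> rw [h]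
                  exacts [hdx, hdz]) (Set.toFinite _)
      by_cases hadj1 : G.Adj u₁.castSucc z
      · by_cases hadj2 : G.Adj u₂.castSucc z
        · exfalso
          have hm1 : u₁.castSucc ∈ {u : Fin (m + 1) | (u : ℕ) < (z : ℕ) ∧ G.Adj u z} :=
            ⟨by rw [hzval]; exact u₁.2, hadj1⟩
          have hm2' : u₂.castSucc ∈ {u : Fin (m + 1) | (u : ℕ) < (z : ℕ) ∧ G.Adj u z} :=
            ⟨by rw [hzval]; exact u₂.2, hadj2⟩
          have hadj12 : G.Adj u₁.castSucc u₂.castSucc :=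
            hBz.1 hm1 hm2' (fun h => hne12 (Fin.castSucc_injective m h))
          exact nkt_indep hk hm2 H' u₁ u₂ hu₁ hu₂ hne12 ((hadj' u₁ u₂).mpr hadj12)
        · exact key u₂ hu₂ hadj2
      · exact key u₁ hu₁ hadj1

end AuxKTree

/-- For `k ≥ 1`, every cobipartite `k`-tree is a linear `k`-tree:
it either is a `(k+1)`-clique or has exactly two vertices of degree `k`. -/
theorem cobipartite_ktree_is_linear
    {V : Type*} [Fintype V] [DecidableEq V] (k : ℕ) (hk : 1 ≤ k)
    (G : SimpleGraph V) (hKT : IsKTree k G) (hco : Cobipartite G) :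
    (Fintype.card V = k + 1 ∧ ∀ u v : V, u ≠ v → G.Adj u v) ∨
      {v : V | (G.neighborSet v).ncard = k}.ncard = 2 := by
  classical
  set n := Fintype.card V with hndef
  obtain ⟨hn, ord, h1, h2⟩ := hKT
  by_cases hcard : n = k + 1
  · left
    refine ⟨hcard, fun u v huv => h1 u v ?_ ?_ huv⟩
    · exact lt_of_lt_of_le (ord u).2 (le_of_eq hcard)
    · exact lt_of_lt_of_le (ord v).2 (le_of_eq hcard)
  · right
    have hn2 : k + 2 ≤ n := by omega
    set G' : SimpleGraph (Fin n) := G.comap (⇑ord.symm) with hG'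
    have hadj' : ∀ i j : Fin n, G'.Adj i j ↔ G.Adj (ord.symm i) (ord.symm j) :=
      fun i j => Iff.rfl
    have hNset : ∀ j : Fin n, G'.neighborSet j = ⇑ord.symm ⁻¹' (G.neighborSet (ord.symm j)) := by
      intro j; ext x; exact Iff.rfl
    have hdeg : ∀ j : Fin n, (G'.neighborSet j).ncard = (G.neighborSet (ord.symm j)).ncard := by
      intro j; rw [hNset, ncard_preimage_equiv]
    have H' : NKT k n G' := by
      constructor
      · intro i j hi hj hij
        refine h1 (ord.symm i) (ord.symm j) ?_ ?_ (fun h => hij (by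
          have := congrArg ord h; simpa using this))
        · rwa [Equiv.apply_symm_apply]
        · rwa [Equiv.apply_symm_apply]
      · intro j hj
        have hv : k + 1 ≤ ((ord (ord.symm j)) : ℕ) := by rwa [Equiv.apply_symm_apply]
        obtain ⟨hcl, hcd⟩ := h2 (ord.symm j) hv
        have hSet : {i : Fin n | (i : ℕ) < (j : ℕ) ∧ G'.Adj i j} =
            ⇑ord.symm ⁻¹' {u : V | ((ord u) : ℕ) < ((ord (ord.symm j)) : ℕ) ∧
              G.Adj u (ord.symm j)} := by
          ext i
          simp only [Set.mem_setOf_eq, Set.mem_preimage, Equiv.apply_symm_apply]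
          exact Iff.rfl
        constructor
        · intro a ha b hb hab
          refine hcl (show _ ∈ _ from ?_) (show _ ∈ _ from ?_)
            (fun h => hab (by have := congrArg ord h; simpa using this))
          · exact ⟨by simpa using ha.1, ha.2⟩
          · exact ⟨by simpa using hb.1, hb.2⟩
        · rw [hSet, ncard_preimage_equiv]
          exact hcd
    -- lower bound
    have hlb : 2 ≤ {v : V | (G.neighborSet v).ncard = k}.ncard := by
      have hDset : {j : Fin n | (G'.neighborSet j).ncard = k} =
          ⇑ord.symm ⁻¹' {v : V | (G.neighborSet v).ncard = k} := by
        ext j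
        simp only [Set.mem_setOf_eq, Set.mem_preimage, hdeg]
      rcases nkt_two hk n G' (by omega) H' with h | h
      · omega
      · rwa [hDset, ncard_preimage_equiv] at h
    -- independence
    have hIndep : ∀ x y : V, (G.neighborSet x).ncard = k → (G.neighborSet y).ncard = k →
        x ≠ y → ¬ G.Adj x y := by
      intro x y hx hy hxy hadj
      refine nkt_indep hk hn2 H' (ord x) (ord y) ?_ ?_
        (fun h => hxy (ord.injective h)) ?_
      · rw [hdeg, Equiv.symm_apply_apply]; exact hx
      · rw [hdeg, Equiv.symm_apply_apply]; exact hy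
      · rw [hadj', Equiv.symm_apply_apply, Equiv.symm_apply_apply]; exact hadj
    -- upper bound via cobipartiteness
    have hub : {v : V | (G.neighborSet v).ncard = k}.ncard ≤ 2 := by
      by_contra hcon
      push_neg at hcon
      set D := {v : V | (G.neighborSet v).ncard = k} with hD
      obtain ⟨a, ha⟩ : D.Nonempty := Set.nonempty_of_ncard_ne_zero (by omega)
      obtain ⟨b, c, hb, hc, hbc⟩ := (Set.one_lt_ncard_iff (Set.toFinite _)).mp
        (show 1 < (D \ {a}).ncard by rw [Set.ncard_diff_singleton_of_mem ha]; omega)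
      obtain ⟨V1, V2, hdis, hunion, hcl1, hcl2⟩ := hco
      have hmem : ∀ x : V, x ∈ V1 ∨ x ∈ V2 := by
        intro x
        have : x ∈ V1 ∪ V2 := by rw [hunion]; exact Set.mem_univ x
        exact this
      have key : ∀ x y : V, x ∈ D → y ∈ D → x ≠ y →
          ¬(x ∈ V1 ∧ y ∈ V1) ∧ ¬(x ∈ V2 ∧ y ∈ V2) := by
        intro x y hx hy hxy
        exact ⟨fun ⟨h1', h2'⟩ => hIndep x y hx hy hxy (hcl1 h1' h2' hxy),
          fun ⟨h1', h2'⟩ => hIndep x y hx hy hxy (hcl2 h1' h2' hxy)⟩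
      have hab : a ≠ b := fun h => hb.2 (show b ∈ ({a} : Set V) from h.symm)
      have hac : a ≠ c := fun h => hc.2 (show c ∈ ({a} : Set V) from h.symm)
      have kab := key a b ha hb.1 hab
      have kac := key a c ha hc.1 hac
      have kbc := key b c hb.1 hc.1 hbc
      rcases hmem a with h1' | h1' <;> rcases hmem b with h2' | h2' <;>
        rcases hmem c with h3' | h3' <;>
        first
          | exact kab.1 ⟨h1', h2'⟩
          | exact kab.2 ⟨h1', h2'⟩
          | exact kac.1 ⟨h1', h3'⟩
          | exact kac.2 ⟨h1', h3'⟩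
          | exact kbc.1 ⟨h2', h3'⟩
          | exact kbc.2 ⟨h2', h3'⟩
    omega
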